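/- For any positive integers ℓ and any x ≥ 2, ∑_{𝔞 ideal of ℤ[i], N(𝔞) ≤ x} d_ℓ(𝔞) ≪_ℓ x·(log x)^{ℓ-1}, where d_ℓ(𝔞) is the number of ways to write the ideal 𝔞 as an ordered product of ℓ ideals. -/

import Mathlib

open scoped GaussianInt

/-- The norm of an ideal of `ℤ[i]`: the cardinality of the quotient ring. -/
noncomputable def idealNorm (𝔞 : Ideal GaussianInt) : ℕ :=
  Nat.card (GaussianInt ⧸ 𝔞)

/-- The `ℓ`-fold divisor function on ideals: the number of ways of writing the ideal `𝔞`
as an ordered product of `ℓ` ideals. -/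
noncomputable def dfoldIdeal (ℓ : ℕ) (𝔞 : Ideal GaussianInt) : ℕ :=
  Nat.card {f : Fin ℓ → Ideal GaussianInt // ∏ i, f i = 𝔞}


open Ideal

def gaussEquiv : GaussianInt ≃ₗ[ℤ] (Fin 2 → ℤ) where
  toFun z := ![z.re, z.im]
  invFun v := ⟨v 0, v 1⟩
  map_add' z w := by funext j; fin_cases j <;> simp
  map_smul' n z := by funext j; fin_cases j <;> simp [zsmul_eq_mul]
  left_inv z := by simp
  right_inv v := by funext j; fin_cases j <;> simp

noncomputable def gaussBasis : Module.Basis (Fin 2) ℤ GaussianInt := Module.Basis.ofEquivFun gaussEquiv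

instance : Module.Free ℤ GaussianInt := Module.Free.of_basis gaussBasis
instance : Module.Finite ℤ GaussianInt := Module.Finite.of_basis gaussBasis

lemma algNorm_eq (z : GaussianInt) : Algebra.norm ℤ z = Zsqrtd.norm z := by
  rw [Algebra.norm_eq_matrix_det gaussBasis, Matrix.det_fin_two]
  simp only [Algebra.leftMulMatrix_eq_repr_mul, gaussBasis, Module.Basis.ofEquivFun_repr_apply,
    Module.Basis.coe_ofEquivFun, gaussEquiv, LinearEquiv.coe_mk, LinearEquiv.coe_symm_mk, Zsqrtd.norm]
  simp [Zsqrtd.re_mul, Zsqrtd.im_mul, Pi.single_apply]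

lemma TFset_finite (n : ℕ) :
    {𝔞 : Ideal GaussianInt | 1 ≤ Ideal.absNorm 𝔞 ∧ Ideal.absNorm 𝔞 ≤ n}.Finite :=
  (Ideal.finite_setOf_absNorm_le n).subset fun _ h => h.2

/-- The finset of nonzero ideals of norm at most `n`. -/
noncomputable def TF (n : ℕ) : Finset (Ideal GaussianInt) := (TFset_finite n).toFinset

lemma mem_TF {n : ℕ} {𝔞 : Ideal GaussianInt} :
    𝔞 ∈ TF n ↔ 1 ≤ Ideal.absNorm 𝔞 ∧ Ideal.absNorm 𝔞 ≤ n := by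
  simp [TF, Set.Finite.mem_toFinset]

lemma card_TF (n : ℕ) : (TF n).card ≤ 9 * n := by
  rcases Nat.eq_zero_or_pos n with rfl | hn
  · have : TF 0 = ∅ := by
      ext 𝔞; simp only [mem_TF, Finset.notMem_empty, iff_false]; omega
    simp [this]
  -- map each ideal to the coordinates of its generator
  set s := Nat.sqrt n with hs
  have hcard : ((Finset.Icc (-(s:ℤ)) s) ×ˢ (Finset.Icc (-(s:ℤ)) s)).card ≤ 9 * n := by
    rw [Finset.card_product, Int.card_Icc]
    have h1 : (↑(s:ℤ) + 1 - -(s:ℤ)).toNat = 2 * s + 1 := by omega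
    rw [h1]
    have hss : s * s ≤ n := Nat.sqrt_le n
    have hs1 : 1 ≤ s := Nat.le_sqrt.mpr (by omega)
    nlinarith
  refine le_trans (Finset.card_le_card_of_injOn
    (fun 𝔞 => ((Submodule.IsPrincipal.generator (𝔞 : Submodule GaussianInt GaussianInt)).re,
               (Submodule.IsPrincipal.generator (𝔞 : Submodule GaussianInt GaussianInt)).im))
    ?_ ?_) hcard
  · intro 𝔞 h𝔞
    simp only [Finset.mem_coe, mem_TF] at h𝔞
    set g := Submodule.IsPrincipal.generator (𝔞 : Submodule GaussianInt GaussianInt) with hg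
    have hspan : Ideal.span {g} = 𝔞 := Ideal.span_singleton_generator 𝔞
    have hnorm : Ideal.absNorm 𝔞 = (Zsqrtd.norm g).natAbs := by
      rw [← hspan, Ideal.absNorm_span_singleton, algNorm_eq]
    have hnn : 0 ≤ Zsqrtd.norm g := Zsqrtd.norm_nonneg (by norm_num) g
    have hle : Zsqrtd.norm g ≤ (n : ℤ) := by omega
    rw [Zsqrtd.norm_def] at hle
    have hre2 : g.re * g.re ≤ (n : ℤ) := by nlinarith [mul_self_nonneg g.im]
    have him2 : g.im * g.im ≤ (n : ℤ) := by nlinarith [mul_self_nonneg g.re]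
    have hre : g.re.natAbs ≤ s := by
      refine Nat.le_sqrt.mpr ?_
      have := Int.natAbs_mul_self (a := g.re)
      exact_mod_cast this ▸ hre2
    have him : g.im.natAbs ≤ s := by
      refine Nat.le_sqrt.mpr ?_
      have := Int.natAbs_mul_self (a := g.im)
      exact_mod_cast this ▸ him2
    show ((g.re, g.im) : ℤ × ℤ) ∈ Finset.Icc (-(s:ℤ)) s ×ˢ Finset.Icc (-(s:ℤ)) s
    simp only [Finset.mem_product, Finset.mem_Icc]
    refine ⟨⟨?_, ?_⟩, ?_, ?_⟩ <;> omega
  · intro 𝔞 h𝔞 𝔟 h𝔟 h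
    have h1 : Submodule.IsPrincipal.generator (𝔞 : Submodule GaussianInt GaussianInt)
        = Submodule.IsPrincipal.generator (𝔟 : Submodule GaussianInt GaussianInt) := by
      have := Prod.ext_iff.mp h
      exact Zsqrtd.ext this.1 this.2
    rw [← Ideal.span_singleton_generator 𝔞, ← Ideal.span_singleton_generator 𝔟]
    exact congrArg (fun z => Ideal.span {z}) h1

lemma log_nat_nonneg (m : ℕ) : 0 ≤ Real.log m := by
  rcases Nat.eq_zero_or_pos m with rfl | hm
  · simp
  · exact Real.log_nonneg (by exact_mod_cast hm)

lemma log_nat_mono {m n : ℕ} (h : m ≤ n) : Real.log m ≤ Real.log n := by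
  rcases Nat.eq_zero_or_pos m with rfl | hm
  · simpa using log_nat_nonneg n
  · exact Real.log_le_log (by exact_mod_cast hm) (by exact_mod_cast h)

lemma harmonic_TF (n : ℕ) :
    ∑ 𝔟 ∈ TF n, (1 / (Ideal.absNorm 𝔟 : ℝ)) ≤ 36 * (1 + Real.log n) := by
  rcases Nat.eq_zero_or_pos n with rfl | hn
  · have : TF 0 = ∅ := by
      ext 𝔞; simp only [mem_TF, Finset.notMem_empty, iff_false]; omega
    simp [this]
  set L := Nat.log 2 n with hL
  have key : ∑ 𝔟 ∈ TF n, (1 / (Ideal.absNorm 𝔟 : ℝ)) ≤ (L + 1 : ℕ) * 18 := by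
    rw [← Finset.sum_fiberwise_of_maps_to (g := fun 𝔟 => Nat.log 2 (Ideal.absNorm 𝔟))
      (t := Finset.range (L + 1)) ?_ (fun 𝔟 => 1 / (Ideal.absNorm 𝔟 : ℝ))]
    · calc _ ≤ (Finset.range (L+1)).card • (18:ℝ) := by
            apply Finset.sum_le_card_nsmul
            intro j hj
            -- inner sum bound
            have hsub : ((TF n).filter fun 𝔟 => Nat.log 2 (Ideal.absNorm 𝔟) = j)
                ⊆ TF (2 ^ (j+1) - 1) := by
              intro 𝔟 h𝔟
              rw [Finset.mem_filter] at h𝔟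
              obtain ⟨hmem, hlog⟩ := h𝔟
              rw [mem_TF] at hmem ⊢
              have hlt : Ideal.absNorm 𝔟 < 2 ^ (j + 1) := by
                have := Nat.lt_pow_succ_log_self (by norm_num : 1 < 2) (Ideal.absNorm 𝔟)
                rwa [hlog] at this
              exact ⟨hmem.1, by omega⟩
            have hcard : (((TF n).filter fun 𝔟 => Nat.log 2 (Ideal.absNorm 𝔟) = j)).card
                ≤ 18 * 2 ^ j := by
              refine le_trans (Finset.card_le_card hsub) (le_trans (card_TF _) ?_)
              have h2 : (2:ℕ) ^ (j+1) = 2 ^ j * 2 := pow_succ 2 j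
              omega
            calc ∑ 𝔟 ∈ (TF n).filter (fun 𝔟 => Nat.log 2 (Ideal.absNorm 𝔟) = j),
                    (1 / (Ideal.absNorm 𝔟 : ℝ))
                ≤ (((TF n).filter fun 𝔟 => Nat.log 2 (Ideal.absNorm 𝔟) = j)).card
                    • (1 / (2 ^ j : ℝ)) := by
                  apply Finset.sum_le_card_nsmul
                  intro 𝔟 h𝔟
                  rw [Finset.mem_filter, mem_TF] at h𝔟
                  have h2j : (2:ℕ) ^ j ≤ Ideal.absNorm 𝔟 := by
                    have := Nat.pow_log_le_self 2 (show Ideal.absNorm 𝔟 ≠ 0 by omega)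
                    rwa [h𝔟.2] at this
                  apply one_div_le_one_div_of_le
                  · positivity
                  · exact_mod_cast h2j
              _ ≤ 18 := by
                  rw [nsmul_eq_mul]
                  have h1 : ((((TF n).filter fun 𝔟 => Nat.log 2 (Ideal.absNorm 𝔟) = j)).card : ℝ)
                      ≤ 18 * 2 ^ j := by exact_mod_cast hcard
                  calc _ ≤ (18 * 2 ^ j : ℝ) * (1 / 2 ^ j) :=
                        mul_le_mul_of_nonneg_right h1 (by positivity)
                    _ = 18 := by field_simp
          _ = (L + 1 : ℕ) * 18 := by simp [Finset.card_range, nsmul_eq_mul]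
    · intro 𝔟 h𝔟
      rw [mem_TF] at h𝔟
      rw [Finset.mem_range]
      show Nat.log 2 (Ideal.absNorm 𝔟) < L + 1
      have : Nat.log 2 (Ideal.absNorm 𝔟) ≤ L := Nat.log_mono_right h𝔟.2
      omega
  refine le_trans key ?_
  have hlog2 : (0.6931471803 : ℝ) < Real.log 2 := Real.log_two_gt_d9
  have hLlog : (L : ℝ) * Real.log 2 ≤ Real.log n := by
    have h2L : (2:ℕ) ^ L ≤ n := Nat.pow_log_le_self 2 (show n ≠ 0 by omega)
    have := log_nat_mono h2L
    rwa [Nat.cast_pow, Real.log_pow, Nat.cast_ofNat] at this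
  have hlogn : 0 ≤ Real.log n := log_nat_nonneg n
  have : (L : ℝ) ≤ 2 * Real.log n := by nlinarith
  push_cast
  nlinarith

lemma idealNorm_eq (𝔞 : Ideal GaussianInt) : idealNorm 𝔞 = Ideal.absNorm 𝔞 := by
  rw [Ideal.absNorm_apply, Submodule.cardQuot_apply]; rfl

lemma mem_TF_of_dvd {n : ℕ} {𝔞 𝔟 : Ideal GaussianInt} (h : 𝔟 ∣ 𝔞) (h0 : 𝔞 ≠ 0)
    (hn : Ideal.absNorm 𝔞 ≤ n) : 𝔟 ∈ TF n := by
  have h𝔟0 : 𝔟 ≠ 0 := by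
    rintro rfl
    exact h0 (zero_dvd_iff.mp h)
  have hd : Ideal.absNorm 𝔟 ∣ Ideal.absNorm 𝔞 := map_dvd Ideal.absNorm h
  have ha0 : Ideal.absNorm 𝔞 ≠ 0 := by
    rw [Ne, Ideal.absNorm_eq_zero_iff, ← Ideal.zero_eq_bot]; exact h0
  have hb0 : Ideal.absNorm 𝔟 ≠ 0 := by
    rw [Ne, Ideal.absNorm_eq_zero_iff, ← Ideal.zero_eq_bot]; exact h𝔟0
  rw [mem_TF]
  exact ⟨by omega, le_trans (Nat.le_of_dvd (by omega) hd) hn⟩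

lemma PFset_finite (ℓ n : ℕ) :
    {f : Fin ℓ → Ideal GaussianInt |
      (∏ i, f i) ≠ 0 ∧ Ideal.absNorm (∏ i, f i) ≤ n}.Finite := by
  apply Set.Finite.subset (Set.Finite.pi (fun _ : Fin ℓ => (TF n).finite_toSet))
  intro f hf
  rw [Set.mem_pi]
  intro i _
  exact mem_TF_of_dvd (Finset.dvd_prod_of_mem f (Finset.mem_univ i)) hf.1 hf.2

/-- The finset of `ℓ`-tuples of ideals with nonzero product of norm at most `n`. -/
noncomputable def PF (ℓ n : ℕ) : Finset (Fin ℓ → Ideal GaussianInt) :=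
  (PFset_finite ℓ n).toFinset

lemma mem_PF {ℓ n : ℕ} {f : Fin ℓ → Ideal GaussianInt} :
    f ∈ PF ℓ n ↔ (∏ i, f i) ≠ 0 ∧ Ideal.absNorm (∏ i, f i) ≤ n := by
  simp [PF, Set.Finite.mem_toFinset]

lemma sum_dfold_eq_card_PF (ℓ n : ℕ) :
    ∑ 𝔞 ∈ TF n, dfoldIdeal ℓ 𝔞 = (PF ℓ n).card := by
  classical
  rw [Finset.card_eq_sum_card_fiberwise (f := fun f => ∏ i, f i) (t := TF n)
    (fun f hf => by
      rw [Finset.mem_coe, mem_PF] at hf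
      exact mem_TF_of_dvd dvd_rfl hf.1 hf.2)]
  refine Finset.sum_congr rfl fun 𝔞 h𝔞 => ?_
  rw [mem_TF] at h𝔞
  have hset : {f : Fin ℓ → Ideal GaussianInt | ∏ i, f i = 𝔞}
      = ↑((PF ℓ n).filter fun f => ∏ i, f i = 𝔞) := by
    ext f
    simp only [Set.mem_setOf_eq, Finset.coe_filter, mem_PF]
    constructor
    · intro h
      refine ⟨⟨?_, ?_⟩, h⟩
      · rw [h]
        intro h0
        rw [h0, Ideal.zero_eq_bot, Ideal.absNorm_bot] at h𝔞
        omega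
      · rw [h]; exact h𝔞.2
    · exact fun h => h.2
  rw [dfoldIdeal]
  show Nat.card ↥{f : Fin ℓ → Ideal GaussianInt | ∏ i, f i = 𝔞} = _
  rw [Nat.card_coe_set_eq, hset, Set.ncard_coe_finset]

lemma dfold_one (𝔞 : Ideal GaussianInt) : dfoldIdeal 1 𝔞 = 1 := by
  rw [dfoldIdeal]
  have : Unique {f : Fin 1 → Ideal GaussianInt // ∏ i, f i = 𝔞} :=
    { default := ⟨fun _ => 𝔞, by simp⟩
      uniq := fun ⟨f, hf⟩ => by
        rw [Fin.prod_univ_one] at hf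
        apply Subtype.ext
        funext i
        have : i = 0 := Subsingleton.elim _ _
        rw [this]; exact hf }
  exact Nat.card_unique

lemma card_PF_one (n : ℕ) : (PF 1 n).card ≤ 9 * n := by
  refine le_trans (Finset.card_le_card_of_injOn (fun f => f 0) ?_ ?_) (card_TF n)
  · intro f hf
    simp only [Finset.mem_coe, mem_PF] at hf
    rw [Fin.prod_univ_one] at hf
    exact mem_TF_of_dvd dvd_rfl hf.1 hf.2
  · intro f _ g _ h
    funext i
    have : i = 0 := Subsingleton.elim _ _
    rw [this]; exact h

lemma card_PF_rec (ℓ n : ℕ) :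
    (PF (ℓ+1) n).card ≤ ∑ 𝔟 ∈ TF n, (PF ℓ (n / Ideal.absNorm 𝔟)).card := by
  rw [← Finset.card_sigma]
  refine Finset.card_le_card_of_injOn (fun f => ⟨f 0, Fin.tail f⟩) ?_ ?_
  · intro f hf
    simp only [Finset.mem_coe, mem_PF] at hf
    have hsplit : (∏ i, f i) = f 0 * ∏ i : Fin ℓ, Fin.tail f i := Fin.prod_univ_succ f
    have h0 : f 0 ∈ TF n := mem_TF_of_dvd ⟨_, hsplit⟩ hf.1 hf.2
    rw [Finset.mem_coe, Finset.mem_sigma]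
    refine ⟨h0, ?_⟩
    rw [mem_PF]
    have htail0 : (∏ i : Fin ℓ, Fin.tail f i) ≠ 0 := by
      intro h
      rw [hsplit, h, mul_zero] at hf
      exact hf.1 rfl
    refine ⟨htail0, ?_⟩
    have hmul : Ideal.absNorm (f 0) * Ideal.absNorm (∏ i : Fin ℓ, Fin.tail f i)
        = Ideal.absNorm (∏ i, f i) := by rw [hsplit, _root_.map_mul]
    have hpos : 0 < Ideal.absNorm (f 0) := by
      rw [mem_TF] at h0; omega
    rw [Nat.le_div_iff_mul_le hpos]
    calc Ideal.absNorm (∏ i : Fin ℓ, Fin.tail f i) * Ideal.absNorm (f 0)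
        = Ideal.absNorm (∏ i, f i) := by rw [← hmul]; ring
      _ ≤ n := hf.2
  · intro f _ g _ h
    simp only [Sigma.mk.inj_iff] at h
    have h2 : Fin.tail f = Fin.tail g := eq_of_heq h.2
    rw [← Fin.cons_self_tail f, ← Fin.cons_self_tail g, h.1, h2]

lemma main_bound (ℓ : ℕ) (hℓ : 1 ≤ ℓ) :
    ∃ C : ℝ, 0 < C ∧ ∀ n : ℕ, ((PF ℓ n).card : ℝ) ≤ C * n * (1 + Real.log n) ^ (ℓ - 1) := by
  induction ℓ, hℓ using Nat.le_induction with
  | base =>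
    refine ⟨9, by norm_num, fun n => ?_⟩
    simp only [Nat.sub_self, pow_zero, mul_one]
    calc ((PF 1 n).card : ℝ) ≤ ((9 * n : ℕ) : ℝ) := by exact_mod_cast card_PF_one n
      _ = 9 * n := by push_cast; ring
  | succ ℓ hℓ ih =>
    obtain ⟨C, hC, hCb⟩ := ih
    refine ⟨36 * C, by positivity, fun n => ?_⟩
    have hrec := card_PF_rec ℓ n
    have step1 : ((PF (ℓ+1) n).card : ℝ)
        ≤ ∑ 𝔟 ∈ TF n, ((PF ℓ (n / Ideal.absNorm 𝔟)).card : ℝ) := by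
      calc ((PF (ℓ+1) n).card : ℝ)
          ≤ ((∑ 𝔟 ∈ TF n, (PF ℓ (n / Ideal.absNorm 𝔟)).card : ℕ) : ℝ) := by exact_mod_cast hrec
        _ = _ := by push_cast; ring
    have hKn : (0:ℝ) ≤ 1 + Real.log n := by
      have := log_nat_nonneg n; linarith
    have step2 : ∀ 𝔟 ∈ TF n, ((PF ℓ (n / Ideal.absNorm 𝔟)).card : ℝ)
        ≤ (C * n * (1 + Real.log n) ^ (ℓ - 1)) * (1 / (Ideal.absNorm 𝔟 : ℝ)) := by
      intro 𝔟 h𝔟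
      rw [mem_TF] at h𝔟
      set m := n / Ideal.absNorm 𝔟 with hm
      have hN : (0:ℝ) < (Ideal.absNorm 𝔟 : ℝ) := by
        have : 0 < Ideal.absNorm 𝔟 := h𝔟.1
        exact_mod_cast this
      have h1 : (m : ℝ) ≤ (n : ℝ) / (Ideal.absNorm 𝔟 : ℝ) := Nat.cast_div_le
      have h2 : (1 + Real.log m) ^ (ℓ - 1) ≤ (1 + Real.log n) ^ (ℓ - 1) := by
        apply pow_le_pow_left₀
        · have := log_nat_nonneg m; linarith
        · have := log_nat_mono (Nat.div_le_self n (Ideal.absNorm 𝔟))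
          linarith
      have hKm : (0:ℝ) ≤ 1 + Real.log m := by
        have := log_nat_nonneg m; linarith
      calc ((PF ℓ m).card : ℝ) ≤ C * m * (1 + Real.log m) ^ (ℓ - 1) := hCb m
        _ ≤ C * ((n : ℝ) / (Ideal.absNorm 𝔟 : ℝ)) * (1 + Real.log n) ^ (ℓ - 1) := by
            apply mul_le_mul
            · exact mul_le_mul_of_nonneg_left h1 hC.le
            · exact h2
            · positivity
            · positivity
        _ = (C * n * (1 + Real.log n) ^ (ℓ - 1)) * (1 / (Ideal.absNorm 𝔟 : ℝ)) := by
            field_simp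
    have step3 : ∑ 𝔟 ∈ TF n, ((PF ℓ (n / Ideal.absNorm 𝔟)).card : ℝ)
        ≤ (C * n * (1 + Real.log n) ^ (ℓ - 1)) * ∑ 𝔟 ∈ TF n, (1 / (Ideal.absNorm 𝔟 : ℝ)) := by
      rw [Finset.mul_sum]
      exact Finset.sum_le_sum step2
    have step4 : (C * n * (1 + Real.log n) ^ (ℓ - 1)) * ∑ 𝔟 ∈ TF n, (1 / (Ideal.absNorm 𝔟 : ℝ))
        ≤ (C * n * (1 + Real.log n) ^ (ℓ - 1)) * (36 * (1 + Real.log n)) := by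
      apply mul_le_mul_of_nonneg_left (harmonic_TF n)
      positivity
    have hpow : (1 + Real.log n) ^ (ℓ - 1) * (1 + Real.log n) = (1 + Real.log n) ^ ℓ := by
      rw [← pow_succ]
      congr 1
      omega
    calc ((PF (ℓ+1) n).card : ℝ)
        ≤ (C * n * (1 + Real.log n) ^ (ℓ - 1)) * (36 * (1 + Real.log n)) :=
          le_trans step1 (le_trans step3 step4)
      _ = 36 * C * n * ((1 + Real.log n) ^ (ℓ - 1) * (1 + Real.log n)) := by ring
      _ = 36 * C * n * (1 + Real.log n) ^ ((ℓ + 1) - 1) := by rw [hpow]; norm_num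

theorem divisor_ideal_sum_bound (ℓ : ℕ) (hℓ : 1 ≤ ℓ) :
    ∃ C : ℝ, 0 < C ∧ ∀ x : ℝ, 2 ≤ x →
      (∑' 𝔞 : Ideal GaussianInt,
          if 1 ≤ idealNorm 𝔞 ∧ (idealNorm 𝔞 : ℝ) ≤ x then (dfoldIdeal ℓ 𝔞 : ℝ) else 0)
        ≤ C * x * Real.log x ^ (ℓ - 1) := by
  obtain ⟨C, hC, hCb⟩ := main_bound ℓ hℓ
  refine ⟨C * 3 ^ (ℓ - 1), by positivity, fun x hx => ?_⟩
  have hx0 : (0:ℝ) ≤ x := by linarith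
  set n₀ := ⌊x⌋₊ with hn₀
  have hn₀x : (n₀ : ℝ) ≤ x := Nat.floor_le hx0
  have hn₀2 : 2 ≤ n₀ := Nat.le_floor (by exact_mod_cast hx)
  have hsum : (∑' 𝔞 : Ideal GaussianInt,
      if 1 ≤ idealNorm 𝔞 ∧ (idealNorm 𝔞 : ℝ) ≤ x then (dfoldIdeal ℓ 𝔞 : ℝ) else 0)
      = ∑ 𝔞 ∈ TF n₀, (dfoldIdeal ℓ 𝔞 : ℝ) := by
    rw [tsum_eq_sum (s := TF n₀) ?_]
    · refine Finset.sum_congr rfl fun 𝔞 h𝔞 => ?_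
      rw [mem_TF] at h𝔞
      rw [if_pos]
      refine ⟨by rw [idealNorm_eq]; exact h𝔞.1, ?_⟩
      rw [idealNorm_eq]
      calc ((Ideal.absNorm 𝔞 : ℝ)) ≤ (n₀ : ℝ) := by exact_mod_cast h𝔞.2
        _ ≤ x := hn₀x
    · intro 𝔞 h𝔞
      rw [if_neg]
      intro hcond
      apply h𝔞
      rw [mem_TF, ← idealNorm_eq]
      exact ⟨hcond.1, Nat.le_floor hcond.2⟩
  rw [hsum]
  have hcast : ∑ 𝔞 ∈ TF n₀, (dfoldIdeal ℓ 𝔞 : ℝ) = ((PF ℓ n₀).card : ℝ) := by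
    rw [← sum_dfold_eq_card_PF]
    push_cast
    ring
  rw [hcast]
  have hb := hCb n₀
  have hlog : Real.log n₀ ≤ Real.log x :=
    Real.log_le_log (by exact_mod_cast Nat.lt_of_lt_of_le Nat.zero_lt_two hn₀2) hn₀x
  have hlogx2 : Real.log 2 ≤ Real.log x := Real.log_le_log (by norm_num) hx
  have hlog2 : (0.6931471803 : ℝ) < Real.log 2 := Real.log_two_gt_d9
  have hlogx : (1/2 : ℝ) ≤ Real.log x := by linarith
  have h3 : 1 + Real.log x ≤ 3 * Real.log x := by linarith
  calc ((PF ℓ n₀).card : ℝ) ≤ C * n₀ * (1 + Real.log n₀) ^ (ℓ - 1) := hb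
    _ ≤ C * x * (3 * Real.log x) ^ (ℓ - 1) := by
        apply mul_le_mul
        · exact mul_le_mul_of_nonneg_left hn₀x hC.le
        · apply pow_le_pow_left₀
          · have := log_nat_nonneg n₀; linarith
          · linarith
        · positivity
        · positivity
    _ = C * 3 ^ (ℓ - 1) * x * Real.log x ^ (ℓ - 1) := by rw [mul_pow]; ring
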